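/- Let A and B be real symmetric m×m matrices, and for p = 1,…,m let μ_p(A) and μ_p(B) denote their eigenvalues (counted with multiplicity) arranged in nonincreasing order. Then Σ_{p=1}^m (μ_p(A) − μ_p(B))² ≤ Σ_{i,j=1}^m (A_{ij} − B_{ij})²; that is, ‖diag λ↓(A) − diag λ↓(B)‖_F ≤ ‖A − B‖_F, the Frobenius-norm instance of Mirsky's eigenvalue perturbation inequality. -/

import Mathlib

open Matrix BigOperators

lemma key {m : ℕ} (A B : Matrix (Fin m) (Fin m) ℝ) (hA : A.IsHermitian) (hB : B.IsHermitian) :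
    ∑ i, ∑ j, A i j * B i j = ∑ p, ∑ q, hA.eigenvalues p * hB.eigenvalues q *
      ((star (hA.eigenvectorUnitary : Matrix (Fin m) (Fin m) ℝ) *
        (hB.eigenvectorUnitary : Matrix (Fin m) (Fin m) ℝ)) p q) ^ 2 := by
  set U : Matrix (Fin m) (Fin m) ℝ := (hA.eigenvectorUnitary : Matrix (Fin m) (Fin m) ℝ) with hU
  set V : Matrix (Fin m) (Fin m) ℝ := (hB.eigenvectorUnitary : Matrix (Fin m) (Fin m) ℝ) with hV
  set a := hA.eigenvalues
  set b := hB.eigenvalues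
  set W : Matrix (Fin m) (Fin m) ℝ := star U * V with hW
  have hAeq : A = U * diagonal a * star U := by simpa using hA.spectral_theorem
  have hBeq : B = V * diagonal b * star V := by simpa using hB.spectral_theorem
  have hBs : ∀ i j, B j i = B i j := fun i j => by
    conv_lhs => rw [← hB]
    simp [conjTranspose_apply]
  have h1 : ∑ i, ∑ j, A i j * B i j = Matrix.trace (A * B) := by
    simp only [Matrix.trace, Matrix.diag, Matrix.mul_apply]
    exact Finset.sum_congr rfl fun i _ => Finset.sum_congr rfl fun j _ => by rw [hBs]
  have h2 : Matrix.trace (A * B) = Matrix.trace (diagonal a * (W * diagonal b * star W)) := by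
    rw [hAeq, hBeq]
    have e1 : U * diagonal a * star U * (V * diagonal b * star V)
        = U * (diagonal a * (star U * (V * (diagonal b * star V)))) := by
      simp [Matrix.mul_assoc]
    rw [e1, Matrix.trace_mul_comm]
    congr 1
    simp only [hW, Matrix.star_mul, star_star, Matrix.mul_assoc]
  rw [h1, h2]
  simp only [Matrix.trace, Matrix.diag, Matrix.mul_apply, Matrix.diagonal_apply,
    Matrix.star_apply, star_trivial, ite_mul, zero_mul, mul_ite, mul_zero,
    Finset.sum_ite_eq, Finset.sum_ite_eq', Finset.mem_univ, if_true]
  refine Finset.sum_congr rfl fun p _ => ?_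
  rw [Finset.mul_sum]
  refine Finset.sum_congr rfl fun q _ => ?_
  ring

lemma sq_mem_DS {m : ℕ} (W : Matrix (Fin m) (Fin m) ℝ)
    (hW : W ∈ Matrix.unitaryGroup (Fin m) ℝ) :
    (Matrix.of fun p q => (W p q) ^ 2) ∈ doublyStochastic ℝ (Fin m) := by
  rw [mem_doublyStochastic_iff_sum]
  have h1 : W * star W = 1 := (Matrix.mem_unitaryGroup_iff).mp hW
  have h2 : star W * W = 1 := (Matrix.mem_unitaryGroup_iff').mp hW
  refine ⟨fun i j => sq_nonneg _, fun i => ?_, fun j => ?_⟩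
  · have := congrArg (fun M => M i i) h1
    simpa [Matrix.mul_apply, Matrix.star_apply, Matrix.one_apply, sq] using this
  · have := congrArg (fun M => M j j) h2
    simpa [Matrix.mul_apply, Matrix.star_apply, Matrix.one_apply, sq] using this

/-- **Mirsky's inequality, Frobenius-norm instance.** If `A` and `B` are real symmetric
`m × m` matrices and `μA`, `μB` are their eigenvalues (counted with multiplicity) arranged in
nonincreasing order, then `∑ p, (μA p - μB p)² ≤ ∑ i j, (A i j - B i j)²`. -/
theorem mirsky_frobenius {m : ℕ} (A B : Matrix (Fin m) (Fin m) ℝ)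
    (hA : A.IsHermitian) (hB : B.IsHermitian)
    (μA μB : Fin m → ℝ)
    (hμA : Antitone μA) (hμB : Antitone μB)
    (σA : Equiv.Perm (Fin m)) (hσA : μA = hA.eigenvalues ∘ σA)
    (σB : Equiv.Perm (Fin m)) (hσB : μB = hB.eigenvalues ∘ σB) :
    ∑ p, (μA p - μB p) ^ 2 ≤ ∑ i, ∑ j, (A i j - B i j) ^ 2 := by
  set a := hA.eigenvalues with ha
  set b := hB.eigenvalues with hb
  set U : Matrix (Fin m) (Fin m) ℝ := (hA.eigenvectorUnitary : Matrix (Fin m) (Fin m) ℝ)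
  set V : Matrix (Fin m) (Fin m) ℝ := (hB.eigenvectorUnitary : Matrix (Fin m) (Fin m) ℝ)
  set W : Matrix (Fin m) (Fin m) ℝ := star U * V with hWdef
  -- squared sums equal
  have hUU : star (hA.eigenvectorUnitary : Matrix (Fin m) (Fin m) ℝ) *
      (hA.eigenvectorUnitary : Matrix (Fin m) (Fin m) ℝ) = 1 :=
    Matrix.mem_unitaryGroup_iff'.mp hA.eigenvectorUnitary.2
  have hVV : star (hB.eigenvectorUnitary : Matrix (Fin m) (Fin m) ℝ) *
      (hB.eigenvectorUnitary : Matrix (Fin m) (Fin m) ℝ) = 1 :=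
    Matrix.mem_unitaryGroup_iff'.mp hB.eigenvectorUnitary.2
  have hUU' : (hA.eigenvectorUnitary : Matrix (Fin m) (Fin m) ℝ) *
      star (hA.eigenvectorUnitary : Matrix (Fin m) (Fin m) ℝ) = 1 :=
    Matrix.mem_unitaryGroup_iff.mp hA.eigenvectorUnitary.2
  have hVV' : (hB.eigenvectorUnitary : Matrix (Fin m) (Fin m) ℝ) *
      star (hB.eigenvectorUnitary : Matrix (Fin m) (Fin m) ℝ) = 1 :=
    Matrix.mem_unitaryGroup_iff.mp hB.eigenvectorUnitary.2
  have hsumA : ∑ p, μA p ^ 2 = ∑ i, ∑ j, A i j * A i j := by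
    have e1 : ∑ p, μA p ^ 2 = ∑ p, a p ^ 2 := by
      rw [hσA]; exact Equiv.sum_comp σA (fun p => a p ^ 2)
    rw [e1, key A A hA hA, hUU]
    refine Finset.sum_congr rfl fun p _ => ?_
    simp [Matrix.one_apply, sq, ha]
  have hsumB : ∑ p, μB p ^ 2 = ∑ i, ∑ j, B i j * B i j := by
    have e1 : ∑ p, μB p ^ 2 = ∑ p, b p ^ 2 := by
      rw [hσB]; exact Equiv.sum_comp σB (fun p => b p ^ 2)
    rw [e1, key B B hB hB, hVV]
    refine Finset.sum_congr rfl fun p _ => ?_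
    simp [Matrix.one_apply, sq, hb]
  -- the cross-term inequality
  have hW : W ∈ Matrix.unitaryGroup (Fin m) ℝ := by
    rw [Matrix.mem_unitaryGroup_iff, hWdef, Matrix.star_mul, star_star]
    calc star U * V * (star V * U) = star U * (V * star V) * U := by
          simp [Matrix.mul_assoc]
      _ = 1 := by rw [hVV']; simp; exact hUU
  obtain ⟨w, hw0, hw1, hwsum⟩ :=
    exists_eq_sum_perm_of_mem_doublyStochastic (sq_mem_DS W hW)
  have monov : Monovary μA μB := by
    intro i j h
    rcases le_total i j with hij | hij
    · exact absurd (hμB hij) (not_le.mpr h)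
    · exact hμA hij
  have hbound : ∀ σ : Equiv.Perm (Fin m), ∑ p, a p * b (σ p) ≤ ∑ p, μA p * μB p := by
    intro σ
    have : ∑ p, a p * b (σ p) = ∑ p, μA p * μB ((σA.trans (σ.trans σB.symm)) p) := by
      rw [← Equiv.sum_comp σA (fun p => a p * b (σ p))]
      refine Finset.sum_congr rfl fun p _ => ?_
      simp [hσA, hσB, Function.comp]
    rw [this]
    exact monov.sum_mul_comp_perm_le_sum_mul
  have hcross : ∑ i, ∑ j, A i j * B i j ≤ ∑ p, μA p * μB p := by
    rw [key A B hA hB]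
    have hS : ∀ p q, (W p q) ^ 2 = ∑ σ : Equiv.Perm (Fin m),
        w σ * (σ.permMatrix ℝ p q) := by
      intro p q
      have := congrArg (fun M => M p q) hwsum
      simp only [Finset.sum_apply, Matrix.smul_apply, smul_eq_mul, Matrix.of_apply, Matrix.sum_apply] at this
      exact this.symm
    calc ∑ p, ∑ q, a p * b q * (W p q) ^ 2
        = ∑ σ : Equiv.Perm (Fin m), w σ * ∑ p, a p * b (σ p) := by
          simp_rw [hS, Finset.mul_sum]
          have reorder : (∑ p, ∑ q, ∑ σ : Equiv.Perm (Fin m),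
              a p * b q * (w σ * (σ.permMatrix ℝ) p q))
            = ∑ σ : Equiv.Perm (Fin m), ∑ p, ∑ q,
              a p * b q * (w σ * (σ.permMatrix ℝ) p q) := by
            calc (∑ p, ∑ q, ∑ σ : Equiv.Perm (Fin m),
                a p * b q * (w σ * (σ.permMatrix ℝ) p q))
                = ∑ p, ∑ σ : Equiv.Perm (Fin m), ∑ q,
                  a p * b q * (w σ * (σ.permMatrix ℝ) p q) :=
                Finset.sum_congr rfl fun p _ => Finset.sum_comm
              _ = _ := Finset.sum_comm
          rw [reorder]
          refine Finset.sum_congr rfl fun σ _ => ?_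
          refine Finset.sum_congr rfl fun p _ => ?_
          have : ∀ q, a p * b q * (w σ * (σ.permMatrix ℝ) p q)
              = (if σ p = q then w σ * (a p * b q) else 0) := by
            intro q
            by_cases h : q = σ p <;>
              simp [Equiv.Perm.permMatrix, PEquiv.toMatrix_apply, Equiv.toPEquiv_apply, h] <;>
              ring_nf
          simp_rw [this]
          simp
      _ ≤ ∑ σ : Equiv.Perm (Fin m), w σ * ∑ p, μA p * μB p := by
          refine Finset.sum_le_sum fun σ _ => mul_le_mul_of_nonneg_left (hbound σ) (hw0 σ)
      _ = ∑ p, μA p * μB p := by rw [← Finset.sum_mul, hw1, one_mul]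
  -- put together
  have expandL : ∑ p, (μA p - μB p) ^ 2
      = ∑ p, μA p ^ 2 + ∑ p, μB p ^ 2 - 2 * ∑ p, μA p * μB p := by
    rw [Finset.mul_sum, ← Finset.sum_add_distrib, ← Finset.sum_sub_distrib]
    exact Finset.sum_congr rfl fun p _ => by ring
  have expandR : ∑ i, ∑ j, (A i j - B i j) ^ 2
      = ∑ i, ∑ j, A i j * A i j + ∑ i, ∑ j, B i j * B i j
        - 2 * ∑ i, ∑ j, A i j * B i j := by
    rw [Finset.mul_sum, ← Finset.sum_add_distrib, ← Finset.sum_sub_distrib]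
    refine Finset.sum_congr rfl fun i _ => ?_
    rw [Finset.mul_sum, ← Finset.sum_add_distrib, ← Finset.sum_sub_distrib]
    exact Finset.sum_congr rfl fun j _ => by ring
  rw [expandL, expandR, ← hsumA, ← hsumB]
  linarith [hcross]
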